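/- Let ω be a nonnegative integrable function on [0,1) such that ω_n ≤ C·ω_{2n} for all n ≥ 1 (equivalently ω ∈ D̂). Then H_ω maps H^∞ boundedly into the Bloch space: there exists C' with |H_ω(f)(0)| + sup_{z∈𝔻}(1-|z|)|H_ω(f)'(z)| ≤ C'·sup_{z∈𝔻}|f(z)| for all bounded analytic f. -/

import Mathlib

open MeasureTheory Set

/-- The moments of a radial weight. -/
noncomputable def mom (ω : ℝ → ℝ) (n : ℕ) : ℝ := ∫ r in (0:ℝ)..1, r ^ n * ω r

/-- The kernel `K^ω_t(z) = Σ_{n≥0} t^n z^n / (2(n+1)ω_{2n+1})`. -/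
noncomputable def Kc (ω : ℝ → ℝ) (t : ℝ) (z : ℂ) : ℂ :=
  ∑' n : ℕ, ((t:ℂ) ^ n * z ^ n) / (2 * ((n:ℂ) + 1) * (mom ω (2 * n + 1) : ℂ))

/-- The Hilbert-type operator induced by the radial weight `ω`. -/
noncomputable def Hw (ω : ℝ → ℝ) (f : ℂ → ℂ) (z : ℂ) : ℂ :=
  ∫ t in (0:ℝ)..1, f (t:ℂ) * Kc ω t z * (ω t : ℂ)

lemma mom_eq_Ioo (ω : ℝ → ℝ) (n : ℕ) :
    mom ω n = ∫ r in Ioo (0:ℝ) 1, r ^ n * ω r := by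
  rw [mom, intervalIntegral.integral_of_le zero_le_one,
    Measure.restrict_congr_set Ioo_ae_eq_Ioc]

lemma momIntegrable {ω : ℝ → ℝ} (hint : IntegrableOn ω (Ico (0:ℝ) 1)) (n : ℕ) :
    IntegrableOn (fun r : ℝ => r ^ n * ω r) (Ioo (0:ℝ) 1) := by
  refine Integrable.bdd_mul (c := 1) (hint.mono_set Ioo_subset_Ico_self)
    (continuous_pow n).aestronglyMeasurable ?_
  filter_upwards [ae_restrict_mem measurableSet_Ioo] with t ht
  rw [Real.norm_eq_abs, abs_pow, abs_of_nonneg ht.1.le]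
  exact pow_le_one₀ ht.1.le ht.2.le

lemma mom_anti {ω : ℝ → ℝ} (hnn : ∀ t ∈ Ico (0:ℝ) 1, 0 ≤ ω t)
    (hint : IntegrableOn ω (Ico (0:ℝ) 1)) {n m : ℕ} (h : n ≤ m) :
    mom ω m ≤ mom ω n := by
  rw [mom_eq_Ioo, mom_eq_Ioo]
  refine setIntegral_mono_on (momIntegrable hint m) (momIntegrable hint n)
    measurableSet_Ioo ?_
  intro r hr
  exact mul_le_mul_of_nonneg_right (pow_le_pow_of_le_one hr.1.le hr.2.le h)
    (hnn r ⟨hr.1.le, hr.2⟩)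

theorem stmt15 (ω : ℝ → ℝ)
    (hnn : ∀ t ∈ Ico (0:ℝ) 1, 0 ≤ ω t)
    (hint : IntegrableOn ω (Ico (0:ℝ) 1))
    (hm : ∀ n : ℕ, 0 < mom ω n)
    (C : ℝ) (hC : 0 < C)
    (hmom : ∀ n : ℕ, 1 ≤ n → mom ω n ≤ C * mom ω (2 * n)) :
    ∃ C' > (0:ℝ), ∀ (f : ℂ → ℂ) (M : ℝ),
      DifferentiableOn ℂ f (Metric.ball 0 1) →
      (∀ z ∈ Metric.ball (0:ℂ) 1, ‖f z‖ ≤ M) →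
      ‖Hw ω f 0‖ +
        (⨆ z : Metric.ball (0:ℂ) 1,
          (1 - ‖(z:ℂ)‖) * ‖deriv (Hw ω f) (z:ℂ)‖) ≤ C' * M := by
  have hB0 : (0:ℝ) < max (C * C) (mom ω 0 / mom ω 1) :=
    lt_max_of_lt_right (div_pos (hm 0) (hm 1))
  set B : ℝ := max (C * C) (mom ω 0 / mom ω 1) with hBdef
  have hBle : ∀ n : ℕ, mom ω n ≤ B * mom ω (2 * n + 1) := by
    intro n
    rcases Nat.eq_zero_or_pos n with rfl | hn
    · have h1 : mom ω 0 = (mom ω 0 / mom ω 1) * mom ω 1 :=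
        (div_mul_cancel₀ _ (hm 1).ne').symm
      calc mom ω 0 = (mom ω 0 / mom ω 1) * mom ω 1 := h1
        _ ≤ B * mom ω (2 * 0 + 1) := by
            simpa using mul_le_mul_of_nonneg_right (le_max_right (C*C) _) (hm 1).le
    · calc mom ω n ≤ C * mom ω (2 * n) := hmom n hn
        _ ≤ C * (C * mom ω (2 * (2 * n))) :=
            mul_le_mul_of_nonneg_left (hmom (2*n) (by omega)) hC.le
        _ = (C * C) * mom ω (2 * (2 * n)) := by ring
        _ ≤ (C * C) * mom ω (2 * n + 1) :=
            mul_le_mul_of_nonneg_left (mom_anti hnn hint (by omega)) (by positivity)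
        _ ≤ B * mom ω (2 * n + 1) :=
            mul_le_mul_of_nonneg_right (le_max_left _ _) (hm _).le
  refine ⟨2 * B, by positivity, ?_⟩
  intro f M hdiff hbound
  have h0mem : (0:ℂ) ∈ Metric.ball (0:ℂ) 1 := by simp
  have hM0 : 0 ≤ M := le_trans (norm_nonneg _) (hbound 0 h0mem)
  -- denominators
  set c : ℕ → ℝ := fun n => 2 * ((n:ℝ) + 1) * mom ω (2*n+1) with hcdef
  have hcval : ∀ n : ℕ, c n = 2 * ((n:ℝ) + 1) * mom ω (2*n+1) := fun n => rfl
  have hcpos : ∀ n, 0 < c n := by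
    intro n; have := hm (2*n+1); rw [hcval n]; positivity
  have hcC : ∀ n : ℕ, ((c n : ℝ) : ℂ) = 2 * ((n:ℂ) + 1) * ((mom ω (2*n+1) : ℝ) : ℂ) := by
    intro n; rw [hcval n]; push_cast; ring
  have hfrac : ∀ n : ℕ, (M * B * mom ω (2*n+1)) / c n * ((n:ℝ)+1) = M * B / 2 := by
    intro n
    have hX : mom ω (2*n+1) ≠ 0 := (hm _).ne'
    have hn1 : ((n:ℝ)+1) ≠ 0 := by positivity
    rw [hcval n]
    field_simp
  have hfrac' : ∀ n : ℕ, (M * B * mom ω (2*n+1)) / c n ≤ M * B / 2 := by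
    intro n
    have h := hfrac n
    have hXnn : 0 ≤ (M * B * mom ω (2*n+1)) / c n :=
      div_nonneg (mul_nonneg (mul_nonneg hM0 hB0.le) (hm _).le) (hcpos n).le
    nlinarith [mul_nonneg hXnn (Nat.cast_nonneg (α := ℝ) n)]
  -- membership helper
  have hmemball : ∀ t : ℝ, t ∈ Ioo (0:ℝ) 1 → (t:ℂ) ∈ Metric.ball (0:ℂ) 1 := by
    intro t ht
    simp only [Metric.mem_ball, dist_zero_right, Complex.norm_real, Real.norm_eq_abs]
    rw [abs_of_nonneg ht.1.le]; exact ht.2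
  -- measurability/integrability of building blocks
  have hfc : ContinuousOn (fun t : ℝ => f (t:ℂ)) (Ioo (0:ℝ) 1) :=
    (hdiff.continuousOn).comp Complex.continuous_ofReal.continuousOn hmemball
  have hfm : AEStronglyMeasurable (fun t : ℝ => f (t:ℂ))
      (volume.restrict (Ioo (0:ℝ) 1)) :=
    hfc.aestronglyMeasurable measurableSet_Ioo
  have hωInt : IntegrableOn (fun t : ℝ => ((ω t : ℝ) : ℂ)) (Ioo (0:ℝ) 1) :=
    (hint.mono_set Ioo_subset_Ico_self).ofReal
  have hGint : ∀ n : ℕ, IntegrableOn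
      (fun t : ℝ => f (t:ℂ) * (t:ℂ)^n * ((ω t : ℝ):ℂ)) (Ioo (0:ℝ) 1) := by
    intro n
    have : IntegrableOn (fun t : ℝ => (f (t:ℂ) * (t:ℂ)^n) * ((ω t : ℝ):ℂ))
        (Ioo (0:ℝ) 1) := by
      refine Integrable.bdd_mul (c := M) hωInt ((hfm.mul ?_)) ?_
      · exact (Complex.continuous_ofReal.pow n).aestronglyMeasurable
      · filter_upwards [ae_restrict_mem measurableSet_Ioo] with t ht
        have hb : ‖f (t:ℂ)‖ ≤ M := hbound _ (hmemball t ht)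
        have h2 : ‖(t:ℂ)^n‖ ≤ 1 := by
          rw [norm_pow, Complex.norm_real, Real.norm_eq_abs, abs_of_nonneg ht.1.le]
          exact pow_le_one₀ ht.1.le ht.2.le
        calc ‖f (t:ℂ) * (t:ℂ)^n‖ = ‖f (t:ℂ)‖ * ‖(t:ℂ)^n‖ := by
              rw [norm_mul]
          _ ≤ M * 1 := mul_le_mul hb h2 (norm_nonneg _) hM0
          _ = M := mul_one M
    exact this
  have hGnormInt : ∀ n : ℕ,
      (∫ t in Ioo (0:ℝ) 1, ‖f (t:ℂ) * (t:ℂ)^n * ((ω t : ℝ):ℂ)‖) ≤ M * mom ω n := by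
    intro n
    have h1 : (∫ t in Ioo (0:ℝ) 1, ‖f (t:ℂ) * (t:ℂ)^n * ((ω t : ℝ):ℂ)‖)
        ≤ ∫ t in Ioo (0:ℝ) 1, M * (t^n * ω t) := by
      refine integral_mono_ae ((hGint n).norm) ((momIntegrable hint n).const_mul M) ?_
      filter_upwards [ae_restrict_mem measurableSet_Ioo] with t ht
      have hb : ‖f (t:ℂ)‖ ≤ M := hbound _ (hmemball t ht)
      have hω0 : 0 ≤ ω t := hnn t ⟨ht.1.le, ht.2⟩
      have heq : ‖f (t:ℂ) * (t:ℂ)^n * ((ω t : ℝ):ℂ)‖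
          = ‖f (t:ℂ)‖ * (t^n * ω t) := by
        rw [norm_mul, norm_mul, Complex.norm_real, norm_pow, Complex.norm_real,
          Real.norm_eq_abs, Real.norm_eq_abs, abs_of_nonneg ht.1.le, abs_of_nonneg hω0]
        ring
      rw [heq]
      have htn : 0 ≤ t^n * ω t := mul_nonneg (pow_nonneg ht.1.le n) hω0
      exact mul_le_mul_of_nonneg_right hb htn
    calc (∫ t in Ioo (0:ℝ) 1, ‖f (t:ℂ) * (t:ℂ)^n * ((ω t : ℝ):ℂ)‖)
        ≤ ∫ t in Ioo (0:ℝ) 1, M * (t^n * ω t) := h1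
      _ = M * ∫ t in Ioo (0:ℝ) 1, t^n * ω t := integral_const_mul M _
      _ = M * mom ω n := by rw [← mom_eq_Ioo]
  set I : ℕ → ℂ := fun n => ∫ t in Ioo (0:ℝ) 1, f (t:ℂ) * (t:ℂ)^n * ((ω t : ℝ):ℂ) with hIdef
  have hInorm : ∀ n, ‖I n‖ ≤ M * mom ω n := fun n =>
    (norm_integral_le_integral_norm _).trans (hGnormInt n)
  set a : ℕ → ℂ := fun n => I n / ((c n : ℝ) : ℂ) with hadef
  have hIabs2 : ∀ n : ℕ, ‖I n‖ ≤ M * B * mom ω (2*n+1) := by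
    intro n
    calc ‖I n‖ ≤ M * mom ω n := hInorm n
      _ ≤ M * (B * mom ω (2*n+1)) := mul_le_mul_of_nonneg_left (hBle n) hM0
      _ = M * B * mom ω (2*n+1) := by ring
  have ha_bound : ∀ n : ℕ, ‖a n‖ * ((n:ℝ) + 1) ≤ M * B / 2 := by
    intro n
    have habs : ‖a n‖ = ‖I n‖ / c n := by
      rw [hadef]; rw [norm_div, Complex.norm_real, Real.norm_eq_abs, abs_of_pos (hcpos n)]
    calc ‖a n‖ * ((n:ℝ)+1)
        = ‖I n‖ / c n * ((n:ℝ)+1) := by rw [habs]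
      _ ≤ (M * B * mom ω (2*n+1)) / c n * ((n:ℝ)+1) :=
          mul_le_mul_of_nonneg_right ((div_le_div_iff_of_pos_right (hcpos n)).mpr (hIabs2 n))
            (by positivity)
      _ = M * B / 2 := hfrac n
  have ha_bound' : ∀ n : ℕ, ‖a n‖ ≤ M * B / 2 := by
    intro n
    have h1 := ha_bound n
    have h2 : ‖a n‖ * 1 ≤ ‖a n‖ * ((n:ℝ)+1) :=
      mul_le_mul_of_nonneg_left
        (by have := Nat.cast_nonneg (α := ℝ) n; linarith) (norm_nonneg _)
    simpa using h2.trans h1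
  -- Step 1 : power series representation
  have key : ∀ z : ℂ, ‖z‖ < 1 → Hw ω f z = ∑' n : ℕ, a n * z^n := by
    intro z hz
    set F : ℕ → ℝ → ℂ :=
      fun n t => (z^n / ((c n : ℝ):ℂ)) * (f (t:ℂ) * (t:ℂ)^n * ((ω t : ℝ):ℂ)) with hFdef
    have hterm : ∀ t : ℝ, f (t:ℂ) * Kc ω t z * ((ω t : ℝ):ℂ) = ∑' n : ℕ, F n t := by
      intro t
      have h1 : f (t:ℂ) * Kc ω t z * ((ω t : ℝ):ℂ)
          = ∑' n : ℕ, (((t:ℂ) ^ n * z ^ n) /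
              (2 * ((n:ℂ) + 1) * ((mom ω (2 * n + 1) : ℝ) : ℂ))) * (f (t:ℂ) * ((ω t : ℝ):ℂ)) := by
        rw [Kc, mul_comm (f (t:ℂ)), mul_assoc, ← tsum_mul_right]
      rw [h1]
      refine tsum_congr fun n => ?_
      rw [hFdef]
      simp only []
      rw [hcC n]
      ring
    have hFint : ∀ n : ℕ, Integrable (F n) (volume.restrict (Ioo (0:ℝ) 1)) :=
      fun n => (hGint n).const_mul _
    have hFnorm : ∀ n : ℕ, (∫ t in Ioo (0:ℝ) 1, ‖F n t‖)
        ≤ (M * B / 2) * ‖z‖ ^ n := by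
      intro n
      have h1 : (∫ t in Ioo (0:ℝ) 1, ‖F n t‖)
          = ‖z^n / ((c n : ℝ):ℂ)‖ * ∫ t in Ioo (0:ℝ) 1,
              ‖f (t:ℂ) * (t:ℂ)^n * ((ω t : ℝ):ℂ)‖ := by
        rw [← integral_const_mul]
        refine integral_congr_ae (Filter.Eventually.of_forall fun t => ?_)
        rw [hFdef]; simp only []; rw [norm_mul]
      rw [h1]
      have h2 : ‖z^n / ((c n : ℝ):ℂ)‖ = ‖z‖ ^ n / c n := by
        rw [norm_div, norm_pow, Complex.norm_real, Real.norm_eq_abs,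
          abs_of_pos (hcpos n)]
      rw [h2]
      have h3 : ‖z‖ ^ n / c n * (∫ t in Ioo (0:ℝ) 1,
          ‖f (t:ℂ) * (t:ℂ)^n * ((ω t : ℝ):ℂ)‖) ≤ ‖z‖ ^ n / c n * (M * mom ω n) := by
        refine mul_le_mul_of_nonneg_left (hGnormInt n)
          (div_nonneg (pow_nonneg (norm_nonneg z) n) (hcpos n).le)
      refine h3.trans ?_
      have h4 : M * mom ω n / c n ≤ M * B / 2 := by
        have h5 : M * mom ω n ≤ M * B * mom ω (2*n+1) := by
          calc M * mom ω n ≤ M * (B * mom ω (2*n+1)) :=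
              mul_le_mul_of_nonneg_left (hBle n) hM0
            _ = M * B * mom ω (2*n+1) := by ring
        have h6 : M * mom ω n / c n ≤ (M * B * mom ω (2*n+1)) / c n :=
          (div_le_div_iff_of_pos_right (hcpos n)).mpr h5
        exact h6.trans (hfrac' n)
      calc ‖z‖ ^ n / c n * (M * mom ω n)
          = (M * mom ω n / c n) * ‖z‖ ^ n := by ring
        _ ≤ (M * B / 2) * ‖z‖ ^ n :=
            mul_le_mul_of_nonneg_right h4 (pow_nonneg (norm_nonneg z) n)
    have hFsum : Summable fun n : ℕ => ∫ t in Ioo (0:ℝ) 1, ‖F n t‖ := by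
      refine Summable.of_nonneg_of_le
        (fun n => integral_nonneg fun t => norm_nonneg _) hFnorm ?_
      exact (summable_geometric_of_lt_one (norm_nonneg z) hz).mul_left _
    have hswap := integral_tsum_of_summable_integral_norm hFint hFsum
    have hres : volume.restrict (Ioc (0:ℝ) 1) = volume.restrict (Ioo (0:ℝ) 1) :=
      (Measure.restrict_congr_set Ioo_ae_eq_Ioc).symm
    calc Hw ω f z = ∫ t in Ioo (0:ℝ) 1, f (t:ℂ) * Kc ω t z * ((ω t : ℝ):ℂ) := by
          rw [Hw, intervalIntegral.integral_of_le zero_le_one, hres]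
      _ = ∫ t in Ioo (0:ℝ) 1, ∑' n : ℕ, F n t := by
          refine integral_congr_ae (Filter.Eventually.of_forall fun t => hterm t)
      _ = ∑' n : ℕ, ∫ t in Ioo (0:ℝ) 1, F n t := hswap.symm
      _ = ∑' n : ℕ, a n * z^n := by
          refine tsum_congr fun n => ?_
          rw [hFdef]
          simp only []
          rw [integral_const_mul, hadef]
          simp only [← hIdef]
          ring
  -- summability at 0
  have hg0sum : Summable (fun n : ℕ => a n * (0:ℂ)^n) := by
    refine summable_of_ne_finset_zero (s := {0}) ?_
    intro n hn
    have hn0 : n ≠ 0 := by simpa using hn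
    simp [zero_pow hn0]
  -- uniform bound on derivative terms
  have hg'b : ∀ (ρ : ℝ), 0 ≤ ρ → ∀ (n : ℕ) (y : ℂ), ‖y‖ ≤ ρ →
      ‖a n * ((n:ℂ) * y^(n-1))‖ ≤ (M*B/2) * ρ^(n-1) := by
    intro ρ hρ n y hy
    have h1 : ‖a n * ((n:ℂ) * y^(n-1))‖
        = ‖a n‖ * ((n:ℝ) * ‖y‖ ^ (n-1)) := by
      rw [norm_mul, norm_mul, norm_pow, Complex.norm_natCast]
    rw [h1]
    have h2 : (n:ℝ) * ‖y‖ ^ (n-1) ≤ ((n:ℝ)+1) * ρ^(n-1) := by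
      refine mul_le_mul (by linarith) (pow_le_pow_left₀ (norm_nonneg y) hy _)
        (pow_nonneg (norm_nonneg y) _) (by positivity)
    calc ‖a n‖ * ((n:ℝ) * ‖y‖ ^ (n-1))
        ≤ ‖a n‖ * (((n:ℝ)+1) * ρ^(n-1)) :=
          mul_le_mul_of_nonneg_left h2 (norm_nonneg _)
      _ = (‖a n‖ * ((n:ℝ)+1)) * ρ^(n-1) := by ring
      _ ≤ (M*B/2) * ρ^(n-1) :=
          mul_le_mul_of_nonneg_right (ha_bound n) (pow_nonneg hρ _)
  -- derivative bound
  have hderiv : ∀ z : ℂ, ‖z‖ < 1 →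
      (1 - ‖z‖) * ‖deriv (Hw ω f) z‖ ≤ M * B := by
    intro z hz
    set r : ℝ := (1 + ‖z‖)/2 with hrdef
    have hzr : ‖z‖ < r := by
      rw [hrdef]; linarith
    have hr1 : r < 1 := by rw [hrdef]; linarith
    have hr0 : (0:ℝ) < r := lt_of_le_of_lt (norm_nonneg z) hzr
    have hu : Summable (fun n : ℕ => (M*B/2) * r^(n-1)) := by
      refine (summable_nat_add_iff 1).mp ?_
      simpa using (summable_geometric_of_lt_one hr0.le hr1).mul_left (M*B/2)
    have Hd : HasDerivAt (fun w : ℂ => ∑' n : ℕ, a n * w^n)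
        (∑' n : ℕ, a n * ((n:ℂ) * z^(n-1))) z := by
      refine hasDerivAt_tsum_of_isPreconnected hu Metric.isOpen_ball
        (convex_ball (0:ℂ) r).isPreconnected
        (fun n y _ => HasDerivAt.const_mul (a n) (hasDerivAt_pow n y))
        (fun n y hy => ?_) (Metric.mem_ball_self hr0) hg0sum ?_
      · have h := mem_ball_zero_iff.mp hy
        exact hg'b r hr0.le n y h.le
      · rw [mem_ball_zero_iff]; exact hzr
    have heq : Hw ω f =ᶠ[nhds z] (fun w : ℂ => ∑' n : ℕ, a n * w^n) := by
      have hzmem : z ∈ Metric.ball (0:ℂ) 1 := by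
        rw [mem_ball_zero_iff]; exact hz
      filter_upwards [Metric.isOpen_ball.mem_nhds hzmem] with w hw
      exact key w (by rwa [mem_ball_zero_iff] at hw)
    rw [heq.deriv_eq, Hd.deriv]
    -- bound the sum
    have hgeo : HasSum (fun n : ℕ => (M*B/2) * ‖z‖ ^ n)
        ((M*B/2) * (1 - ‖z‖)⁻¹) :=
      (hasSum_geometric_of_lt_one (norm_nonneg z) hz).mul_left _
    have hgeo' : HasSum (fun n : ℕ => (M*B/2) * ‖z‖ ^ (n-1))
        ((M*B/2) * (1 - ‖z‖)⁻¹ + (M*B/2)) := by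
      have h1 : HasSum (fun n : ℕ => (M*B/2) * ‖z‖ ^ ((n+1)-1))
          ((M*B/2) * (1 - ‖z‖)⁻¹) := by simpa using hgeo
      have h2 := (hasSum_nat_add_iff
        (f := fun n : ℕ => (M*B/2) * ‖z‖ ^ (n-1)) 1).mp h1
      simpa using h2
    have hbound2 : ‖∑' n : ℕ, a n * ((n:ℂ) * z^(n-1))‖
        ≤ (M*B/2) * (1 - ‖z‖)⁻¹ + (M*B/2) := by
      exact tsum_of_norm_bounded hgeo'
        (fun n => hg'b (‖z‖) (norm_nonneg z) n z le_rfl)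
    have h1z : 0 < 1 - ‖z‖ := by linarith
    calc (1 - ‖z‖) * ‖∑' n : ℕ, a n * ((n:ℂ) * z^(n-1))‖
        ≤ (1 - ‖z‖) * ((M*B/2) * (1 - ‖z‖)⁻¹ + (M*B/2)) :=
          mul_le_mul_of_nonneg_left hbound2 h1z.le
      _ = (M*B/2) + (M*B/2) * (1 - ‖z‖) := by
          field_simp
      _ ≤ M * B := by nlinarith [mul_nonneg hM0 hB0.le, norm_nonneg z]
  -- value at 0
  have h0 : ‖Hw ω f 0‖ ≤ M * B / 2 := by
    rw [key 0 (by simp)]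
    rw [tsum_eq_single 0 (fun n hn => by simp [zero_pow hn])]
    simpa using ha_bound' 0
  -- conclude
  have : Nonempty (Metric.ball (0:ℂ) 1) := ⟨⟨0, h0mem⟩⟩
  have hsup : (⨆ z : Metric.ball (0:ℂ) 1,
      (1 - ‖(z:ℂ)‖) * ‖deriv (Hw ω f) (z:ℂ)‖) ≤ M * B := by
    refine Real.iSup_le (fun z => ?_) (by positivity)
    refine hderiv (z:ℂ) ?_
    have := z.2
    rwa [mem_ball_zero_iff] at this
  calc ‖Hw ω f 0‖ + (⨆ z : Metric.ball (0:ℂ) 1,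
      (1 - ‖(z:ℂ)‖) * ‖deriv (Hw ω f) (z:ℂ)‖)
      ≤ M * B / 2 + M * B := add_le_add h0 hsup
    _ ≤ 2 * B * M := by nlinarith [mul_nonneg hM0 hB0.le]
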